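/- Let n be a positive integer, let M be an n²×n² matrix over 𝔽₂ such that every diagonal entry of M equals 1, and let c be any vector in 𝔽₂^{n²}. Then there exists a (possibly empty) finite set S of row indices such that the vector c + Σ_{i∈S} M_i (sum over 𝔽₂, where M_i denotes the i-th row of M) has Hamming weight w satisfying 2w ≥ n. -/

import Mathlib

/-- Let `n` be a positive integer, `M` an `n² × n²` matrix over `𝔽₂` whose diagonal
entries are all `1`, and `c` any vector in `𝔽₂^{n²}`. Then there is a (possibly empty)
set `S` of row indices such that `c + ∑_{i ∈ S} Mᵢ` has Hamming weight `w` with `2w ≥ n`. -/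
theorem stmt_1 (n : ℕ) (hn : 0 < n) (M : Matrix (Fin (n ^ 2)) (Fin (n ^ 2)) (ZMod 2))
    (hdiag : ∀ i, M i i = 1) (c : Fin (n ^ 2) → ZMod 2) :
    ∃ S : Finset (Fin (n ^ 2)),
      n ≤ 2 * hammingNorm (fun j => c j + ∑ i ∈ S, M i j) := by
  by_contra h
  push_neg at h
  have hN1 : 1 ≤ n ^ 2 := Nat.one_le_pow _ _ hn
  set v : Finset (Fin (n ^ 2)) → Fin (n ^ 2) → ZMod 2 :=
    fun S j => c j + ∑ i ∈ S, M i j with hv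
  set t : Finset (Fin (n ^ 2)) → Fin (n ^ 2) → Finset (Fin (n ^ 2)) :=
    fun S j => if j ∈ S then S.erase j else insert j S with ht
  have h20 : (-2 : ZMod 2) = 0 := by decide
  have toggle : ∀ (S : Finset (Fin (n ^ 2))) (j : Fin (n ^ 2)), v (t S j) j = v S j + 1 := by
    intro S j
    by_cases hj : j ∈ S
    · have hsum : M j j + ∑ x ∈ S.erase j, M x j = ∑ x ∈ S, M x j :=
        Finset.add_sum_erase S (fun i => M i j) hj
      rw [hdiag j] at hsum
      simp only [hv, ht, if_pos hj]
      linear_combination hsum + h20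
    · simp only [hv, ht, if_neg hj, Finset.sum_insert hj, hdiag j]; ring
  have tinv : ∀ (S : Finset (Fin (n ^ 2))) (j : Fin (n ^ 2)), t (t S j) j = S := by
    intro S j
    by_cases hj : j ∈ S
    · simp [ht, hj, Finset.notMem_erase, Finset.insert_erase hj]
    · simp [ht, hj, Finset.erase_insert hj]
  have halfcount : ∀ j : Fin (n ^ 2),
      (Finset.univ.filter (fun S : Finset (Fin (n ^ 2)) => v S j ≠ 0)).card
        = 2 ^ (n ^ 2 - 1) := by
    intro j
    have hcardeq : (Finset.univ.filter (fun S : Finset (Fin (n ^ 2)) => v S j ≠ 0)).card =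
        (Finset.univ.filter (fun S : Finset (Fin (n ^ 2)) => v S j = 0)).card := by
      apply Finset.card_bij' (fun S _ => t S j) (fun S _ => t S j)
      · intro S hS
        simp only [Finset.mem_filter, Finset.mem_univ, true_and] at hS ⊢
        rw [toggle]
        have h1 : v S j = 1 := by
          revert hS; generalize v S j = x; revert x; decide
        rw [h1]; decide
      · intro S hS
        simp only [Finset.mem_filter, Finset.mem_univ, true_and] at hS ⊢
        rw [toggle, hS]; decide
      · intro S _; exact tinv S j
      · intro S _; exact tinv S j
    have hsplit : (Finset.univ.filter (fun S : Finset (Fin (n ^ 2)) => v S j ≠ 0)).card +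
        (Finset.univ.filter (fun S : Finset (Fin (n ^ 2)) => v S j = 0)).card
          = 2 ^ (n ^ 2) := by
      rw [add_comm, Finset.card_filter_add_card_filter_not]
      simp [Finset.card_univ]
    have hp : (2 : ℕ) ^ (n ^ 2) = 2 * 2 ^ (n ^ 2 - 1) := by
      rw [← pow_succ']; congr 1; omega
    omega
  have hsum : ∑ S : Finset (Fin (n ^ 2)), hammingNorm (v S) = n ^ 2 * 2 ^ (n ^ 2 - 1) := by
    calc ∑ S : Finset (Fin (n ^ 2)), hammingNorm (v S)
        = ∑ S : Finset (Fin (n ^ 2)), ∑ j : Fin (n ^ 2), if v S j ≠ 0 then 1 else 0 := by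
          refine Finset.sum_congr rfl fun S _ => ?_
          rw [hammingNorm, Finset.card_filter]
      _ = ∑ j : Fin (n ^ 2), ∑ S : Finset (Fin (n ^ 2)), if v S j ≠ 0 then 1 else 0 :=
          Finset.sum_comm
      _ = ∑ j : Fin (n ^ 2),
            (Finset.univ.filter (fun S : Finset (Fin (n ^ 2)) => v S j ≠ 0)).card := by
          refine Finset.sum_congr rfl fun j _ => ?_
          rw [Finset.card_filter]
      _ = ∑ _j : Fin (n ^ 2), 2 ^ (n ^ 2 - 1) :=
          Finset.sum_congr rfl fun j _ => halfcount j
      _ = n ^ 2 * 2 ^ (n ^ 2 - 1) := by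
          rw [Finset.sum_const, Finset.card_univ, Fintype.card_fin, smul_eq_mul]
  have hub : ∀ S : Finset (Fin (n ^ 2)), 2 * hammingNorm (v S) ≤ n - 1 := by
    intro S
    have := h S
    simp only [hv] at this ⊢
    omega
  have hle : 2 * ∑ S : Finset (Fin (n ^ 2)), hammingNorm (v S) ≤ (n - 1) * 2 ^ (n ^ 2) := by
    rw [Finset.mul_sum]
    calc ∑ S : Finset (Fin (n ^ 2)), 2 * hammingNorm (v S)
        ≤ ∑ _S : Finset (Fin (n ^ 2)), (n - 1) := Finset.sum_le_sum fun S _ => hub S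
      _ = (n - 1) * 2 ^ (n ^ 2) := by
          rw [Finset.sum_const, Finset.card_univ, smul_eq_mul, mul_comm]
          simp
  rw [hsum] at hle
  have hNn : n ≤ n ^ 2 := by nlinarith
  have hpow : 2 * (n ^ 2 * 2 ^ (n ^ 2 - 1)) = n ^ 2 * 2 ^ (n ^ 2) := by
    have hp : (2 : ℕ) ^ (n ^ 2) = 2 * 2 ^ (n ^ 2 - 1) := by
      rw [← pow_succ']; congr 1; omega
    rw [hp]; ring
  rw [hpow] at hle
  have h2pos : 0 < 2 ^ (n ^ 2) := Nat.pow_pos (by norm_num)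
  have : n ^ 2 ≤ n - 1 := Nat.le_of_mul_le_mul_right (by linarith [hle]) h2pos
  omega
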